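/- Let α ∈ [1/2, 1). For any real numbers h_y, h_i ∈ [0,1] with h_y − h_i < (1−α)/α, there exist real numbers g_y, g_i ∈ [0,1] such that (1−α)·g_y + α·h_y < (1−α)·g_i + α·h_i. Consequently, the margin hypothesis (1−α)/α in the mixed-classifier robustness lemma cannot be weakened when no assumption is made on the standard classifier g beyond its outputs lying in [0,1]: if the robust classifier's gap between the top class and another class falls below (1−α)/α at a perturbed input, there is a choice of probability outputs for g under which the mixed classifier misclassifies that input. -/
import Mathlib

/-- **Tightness of the margin `(1-α)/α` in the mixed-classifier robustness lemma.**
If `α ∈ [1/2, 1)` and the robust classifier's probability gap `h_y - h_i` falls below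
`(1-α)/α`, then there exist probability outputs `g_y, g_i ∈ [0,1]` for the standard
classifier under which the mixed classifier prefers class `i` over class `y`. -/
theorem mixed_classifier_margin_tight
    (α : ℝ) (hα : α ∈ Set.Ico (1 / 2 : ℝ) 1)
    (hy hi : ℝ)
    (hhy : hy ∈ Set.Icc (0 : ℝ) 1) (hhi : hi ∈ Set.Icc (0 : ℝ) 1)
    (hgap : hy - hi < (1 - α) / α) :
    ∃ gy gi : ℝ, gy ∈ Set.Icc (0 : ℝ) 1 ∧ gi ∈ Set.Icc (0 : ℝ) 1 ∧
      (1 - α) * gy + α * hy < (1 - α) * gi + α * hi := by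
  obtain ⟨hα1, hα2⟩ := hα
  have hαpos : (0 : ℝ) < α := by linarith
  refine ⟨0, 1, ⟨le_refl _, zero_le_one⟩, ⟨zero_le_one, le_refl _⟩, ?_⟩
  nlinarith [(lt_div_iff₀ hαpos).mp hgap]
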